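/- Let 1 → N → G → U → 1 be a short exact sequence of linear algebraic groups over an algebraically closed field of characteristic zero, with U isomorphic to the additive group G_a. Then the sequence splits: there is a one-dimensional unipotent subgroup of G mapping isomorphically onto U. -/

import Mathlib

section AuxiliaryLemmas
open Polynomial Finset Module


section EPAll

open Polynomial Finset

variable {k : Type*} [Field k] [CharZero k]

private lemma polyC_aux {μ ν : k} (hμν : μ ≠ ν) {p : k[X]}
    (h : Polynomial.C μ * p.comp (X + Polynomial.C 1) = Polynomial.C ν * p) : p = 0 := by
  by_contra hp
  have hdeg : (p.comp (X + Polynomial.C 1)).natDegree = p.natDegree := by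
    rw [natDegree_comp, natDegree_X_add_C, mul_one]
  have h1 : (X + Polynomial.C (1:k)).natDegree = 1 := natDegree_X_add_C 1
  have hlc2 : (p.comp (X + Polynomial.C 1)).leadingCoeff = p.leadingCoeff := by
    rw [Polynomial.leadingCoeff_comp (by rw [h1]; norm_num),
      (monic_X_add_C (1:k)).leadingCoeff, one_pow, mul_one]
  have hlc : (p.comp (X + Polynomial.C 1)).coeff p.natDegree = p.leadingCoeff := by
    rw [← hdeg, Polynomial.coeff_natDegree]; exact hlc2
  have := congrArg (fun q => Polynomial.coeff q p.natDegree) h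
  simp only [coeff_C_mul, hlc] at this
  rw [show p.coeff p.natDegree = p.leadingCoeff from rfl] at this
  have hlcn : p.leadingCoeff ≠ 0 := leadingCoeff_ne_zero.mpr hp
  have : (μ - ν) * p.leadingCoeff = 0 := by ring_nf; linear_combination this
  rcases mul_eq_zero.mp this with h' | h'
  · exact hμν (sub_eq_zero.mp h')
  · exact hlcn h'

private lemma comp_sub_natDegree {p : k[X]} (hp : p.natDegree ≠ 0) :
    (p.comp (X + Polynomial.C 1) - p).natDegree < p.natDegree := by
  have hpne : p ≠ 0 := fun h => hp (by simp [h])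
  have hdeg : (p.comp (X + Polynomial.C 1)).natDegree = p.natDegree := by
    rw [natDegree_comp, natDegree_X_add_C, mul_one]
  have hcne : p.comp (X + Polynomial.C 1) ≠ 0 := by
    intro h; rw [h] at hdeg; simp at hdeg; exact hp hdeg.symm
  have h1 : (X + Polynomial.C (1:k)).natDegree = 1 := natDegree_X_add_C 1
  have hlc : (p.comp (X + Polynomial.C 1)).leadingCoeff = p.leadingCoeff := by
    rw [Polynomial.leadingCoeff_comp (by rw [h1]; norm_num),
      (monic_X_add_C (1:k)).leadingCoeff, one_pow, mul_one]
  by_cases hz : p.comp (X + Polynomial.C 1) - p = 0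
  · rw [hz]; simpa using Nat.pos_of_ne_zero hp
  have hdd : (p.comp (X + Polynomial.C 1)).degree = p.degree := by
    rw [degree_eq_natDegree hpne, degree_eq_natDegree hcne, hdeg]
  have := Polynomial.degree_sub_lt hdd hcne hlc
  exact Polynomial.natDegree_lt_natDegree hz (by rwa [hdd] at this)

/-- linear independence of exponential-polynomial sequences -/
private lemma lemA : ∀ (N : ℕ) (s : Finset k), s.card ≤ N → (∀ μ ∈ s, μ ≠ (0:k)) →
    ∀ (q : k → k[X]), (∀ m : ℕ, ∑ μ ∈ s, (q μ).eval (m : k) * μ ^ m = 0) →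
    ∀ μ ∈ s, q μ = 0 := by
  intro N
  induction N with
  | zero =>
    intro s hcard _ q _ μ hμ
    rw [Nat.le_zero, Finset.card_eq_zero] at hcard
    simp [hcard] at hμ
  | succ N ih =>
    intro s hcard hs q hsum
    classical
    rcases Finset.eq_empty_or_nonempty s with rfl | ⟨μ₀, hμ₀⟩
    · simp
    -- base helper: if q μ₀ = 0 we can drop μ₀
    have base : ∀ q' : k → k[X], q' μ₀ = 0 →
        (∀ m : ℕ, ∑ μ ∈ s, (q' μ).eval (m : k) * μ ^ m = 0) → ∀ μ ∈ s, q' μ = 0 := by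
      intro q' h0 hsum' μ hμ
      have herase : ∀ m : ℕ, ∑ μ ∈ s.erase μ₀, (q' μ).eval (m : k) * μ ^ m = 0 := by
        intro m
        have := hsum' m
        rw [← Finset.add_sum_erase s (fun μ => (q' μ).eval (m:k) * μ ^ m) hμ₀, h0] at this
        simpa using this
      have hcard' : (s.erase μ₀).card ≤ N := by
        have := Finset.card_erase_of_mem hμ₀
        omega
      have := ih (s.erase μ₀) hcard' (fun μ hμ => hs μ (Finset.mem_of_mem_erase hμ)) q' herase
      rcases eq_or_ne μ μ₀ with rfl | hne
      · exact h0
      · exact this μ (Finset.mem_erase.mpr ⟨hne, hμ⟩)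
    -- measure
    set meas : k[X] → ℕ := fun p => if p = 0 then 0 else p.natDegree + 1 with hmeas
    suffices H : ∀ (d : ℕ) (q' : k → k[X]), meas (q' μ₀) ≤ d →
        (∀ m : ℕ, ∑ μ ∈ s, (q' μ).eval (m : k) * μ ^ m = 0) → ∀ μ ∈ s, q' μ = 0 by
      exact H (meas (q μ₀)) q le_rfl hsum
    intro d
    induction d with
    | zero =>
      intro q' hd hsum'
      have h0 : q' μ₀ = 0 := by
        by_contra h
        simp [hmeas, h] at hd
      exact base q' h0 hsum'
    | succ d ihd =>
      intro q' hd hsum'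
      by_cases h0 : q' μ₀ = 0
      · exact base q' h0 hsum'
      set q'' : k → k[X] :=
        fun μ => Polynomial.C μ * (q' μ).comp (X + Polynomial.C 1) - Polynomial.C μ₀ * q' μ
        with hq''
      have hsum'' : ∀ m : ℕ, ∑ μ ∈ s, (q'' μ).eval (m : k) * μ ^ m = 0 := by
        intro m
        have expand : ∀ μ ∈ s, (q'' μ).eval (m : k) * μ ^ m =
            ((q' μ).eval ((m+1 : ℕ) : k) * μ ^ (m+1)) - μ₀ * ((q' μ).eval (m:k) * μ ^ m) := by
          intro μ _
          simp only [hq'', eval_sub, eval_mul, eval_C, eval_comp, eval_add, eval_X, eval_one]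
          push_cast
          ring
        rw [Finset.sum_congr rfl expand, Finset.sum_sub_distrib, ← Finset.mul_sum,
          hsum' (m+1), hsum' m]
        ring
      have hmeas'' : meas (q'' μ₀) ≤ d := by
        have hfac : q'' μ₀ = Polynomial.C μ₀ * ((q' μ₀).comp (X + Polynomial.C 1) - q' μ₀) := by
          rw [hq'']; ring
        by_cases hdeg0 : (q' μ₀).natDegree = 0
        · obtain ⟨c, hc⟩ := Polynomial.natDegree_eq_zero.mp hdeg0
          have : q'' μ₀ = 0 := by rw [hfac, ← hc]; simp
          simp [hmeas, this]
        · have hlt := comp_sub_natDegree (p := q' μ₀) hdeg0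
          have hle : (q'' μ₀).natDegree ≤ ((q' μ₀).comp (X + Polynomial.C 1) - q' μ₀).natDegree := by
            rw [hfac]; exact natDegree_C_mul_le _ _
          have hd' : (q' μ₀).natDegree + 1 ≤ d + 1 := by
            simpa [hmeas, h0] using hd
          have : (q'' μ₀).natDegree + 1 ≤ d := by omega
          by_cases hz : q'' μ₀ = 0
          · simp [hmeas, hz]
          · simp only [hmeas, hz, if_false]; omega
      have hall := ihd q'' hmeas'' hsum''
      -- for μ ≠ μ₀ conclude q' μ = 0
      have hne0 : ∀ μ ∈ s, μ ≠ μ₀ → q' μ = 0 := by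
        intro μ hμ hne
        have := hall μ hμ
        rw [hq''] at this
        have heq : Polynomial.C μ * (q' μ).comp (X + Polynomial.C 1) = Polynomial.C μ₀ * q' μ :=
          sub_eq_zero.mp this
        exact polyC_aux hne heq
      -- now the sum reduces to the μ₀ term
      have hone : ∀ m : ℕ, (q' μ₀).eval (m : k) * μ₀ ^ m = 0 := by
        intro m
        have := hsum' m
        rw [← Finset.add_sum_erase s (fun μ => (q' μ).eval (m:k) * μ ^ m) hμ₀] at this
        have hrest : ∑ μ ∈ s.erase μ₀, (q' μ).eval (m : k) * μ ^ m = 0 := by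
          apply Finset.sum_eq_zero
          intro μ hμ
          rw [hne0 μ (Finset.mem_of_mem_erase hμ) (Finset.mem_erase.mp hμ).1]
          simp
        rw [hrest] at this
        simpa using this
      have hq0 : q' μ₀ = 0 := by
        have hroots : ∀ m : ℕ, (q' μ₀).IsRoot ((m : k)) := by
          intro m
          have := hone m
          have hpow : μ₀ ^ m ≠ 0 := pow_ne_zero _ (hs μ₀ hμ₀)
          exact mul_eq_zero.mp this |>.resolve_right hpow
        apply Polynomial.eq_zero_of_infinite_isRoot
        apply Set.Infinite.mono (s := Set.range ((↑) : ℕ → k))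
        · rintro x ⟨m, rfl⟩; exact hroots m
        · exact Set.infinite_range_of_injective Nat.cast_injective
      intro μ hμ
      rcases eq_or_ne μ μ₀ with rfl | hne
      · exact hq0
      · exact hne0 μ hμ hne

lemma expPoly_indep (s : Finset k) (hs : ∀ μ ∈ s, μ ≠ (0:k)) (q : k → k[X])
    (hsum : ∀ m : ℕ, ∑ μ ∈ s, (q μ).eval (m : k) * μ ^ m = 0) :
    ∀ μ ∈ s, q μ = 0 :=
  lemA s.card s le_rfl hs q hsum

section EP
variable {k : Type*} [Field k] [CharZero k]

/-- two-parameter exponential polynomial functions -/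
def EP2 (F : k → ℕ → k) : Prop :=
  ∃ (N : ℕ) (c : Fin N → Polynomial k) (ν : Fin N → k),
    (∀ i, ν i ≠ 0) ∧ ∀ (a : k) (m : ℕ), F a m = ∑ i, (c i).eval a * (ν i) ^ m

lemma EP2.add {F G : k → ℕ → k} (hF : EP2 F) (hG : EP2 G) :
    EP2 (fun a m => F a m + G a m) := by
  obtain ⟨N1, c1, ν1, h1, e1⟩ := hF
  obtain ⟨N2, c2, ν2, h2, e2⟩ := hG
  refine ⟨N1 + N2, Fin.append c1 c2, Fin.append ν1 ν2, ?_, ?_⟩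
  · intro i
    refine Fin.addCases (fun j => ?_) (fun j => ?_) i
    · simpa [Fin.append_left] using h1 j
    · simpa [Fin.append_right] using h2 j
  · intro a m
    rw [Fin.sum_univ_add]
    simp only [Fin.append_left, Fin.append_right]
    rw [e1, e2]

lemma EP2.mul {F G : k → ℕ → k} (hF : EP2 F) (hG : EP2 G) :
    EP2 (fun a m => F a m * G a m) := by
  obtain ⟨N1, c1, ν1, h1, e1⟩ := hF
  obtain ⟨N2, c2, ν2, h2, e2⟩ := hG
  refine ⟨N1 * N2, fun i => c1 (finProdFinEquiv.symm i).1 * c2 (finProdFinEquiv.symm i).2,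
    fun i => ν1 (finProdFinEquiv.symm i).1 * ν2 (finProdFinEquiv.symm i).2,
    fun i => mul_ne_zero (h1 _) (h2 _), ?_⟩
  intro a m
  calc F a m * G a m
      = (∑ i, (c1 i).eval a * ν1 i ^ m) * (∑ j, (c2 j).eval a * ν2 j ^ m) := by rw [e1, e2]
    _ = ∑ i, ∑ j, ((c1 i * c2 j).eval a * (ν1 i * ν2 j) ^ m) := by
        rw [Finset.sum_mul_sum]
        refine Finset.sum_congr rfl fun i _ => Finset.sum_congr rfl fun j _ => ?_
        simp only [Polynomial.eval_mul, mul_pow]; ring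
    _ = ∑ p : Fin N1 × Fin N2, ((c1 p.1 * c2 p.2).eval a * (ν1 p.1 * ν2 p.2) ^ m) :=
        (Fintype.sum_prod_type (f := fun p : Fin N1 × Fin N2 => (c1 p.1 * c2 p.2).eval a * (ν1 p.1 * ν2 p.2) ^ m)).symm
    _ = _ := (Equiv.sum_comp finProdFinEquiv.symm
        (fun p : Fin N1 × Fin N2 => (c1 p.1 * c2 p.2).eval a * (ν1 p.1 * ν2 p.2) ^ m)).symm

lemma EP2.const (c : k) : EP2 (fun _ _ => c) :=
  ⟨1, fun _ => Polynomial.C c, fun _ => 1, fun _ => one_ne_zero, fun a m => by simp⟩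

lemma EP2.poly (p : k[X]) : EP2 (fun a _ => p.eval a) :=
  ⟨1, fun _ => p, fun _ => 1, fun _ => one_ne_zero, fun a m => by simp⟩

lemma EP2.mvEval {σ : Type*} (P : MvPolynomial σ k) (E : σ → k → ℕ → k)
    (hE : ∀ i, EP2 (E i)) : EP2 (fun a m => MvPolynomial.eval (fun i => E i a m) P) := by
  induction P using MvPolynomial.induction_on with
  | C c => simpa using EP2.const c
  | add p q hp hq => simp only [map_add]; exact hp.add hq
  | mul_X p i hp => simp only [map_mul, MvPolynomial.eval_X]; exact hp.mul (hE i)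

lemma EP2.vanish {F : k → ℕ → k} (hF : EP2 F) (h : ∀ m : ℕ, F (m:k) m = 0) :
    ∀ (a : k) (m : ℕ), F a m = 0 := by
  classical
  obtain ⟨N, c, ν, hν, e⟩ := hF
  set T := Finset.image ν Finset.univ with hT
  set Q : k → k[X] := fun t => ∑ i ∈ Finset.univ.filter (fun i => ν i = t), c i with hQ
  have key : ∀ (a : k) (m : ℕ), F a m = ∑ t ∈ T, (Q t).eval a * t ^ m := by
    intro a m
    rw [e, ← Finset.sum_fiberwise_of_maps_to (g := ν)
      (fun i _ => Finset.mem_image_of_mem ν (Finset.mem_univ i))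
      (fun i => (c i).eval a * ν i ^ m)]
    refine Finset.sum_congr rfl fun t ht => ?_
    simp only [hQ, Polynomial.eval_finset_sum, Finset.sum_mul]
    refine Finset.sum_congr rfl fun i hi => ?_
    rw [(Finset.mem_filter.mp hi).2]
  have hz := expPoly_indep T (by
      intro μ hμ
      obtain ⟨i, _, rfl⟩ := Finset.mem_image.mp hμ
      exact hν i) Q (fun m => by rw [← key, h])
  intro a m
  rw [key]
  exact Finset.sum_eq_zero fun t ht => by rw [hz t ht]; simp

/-- one-parameter, constant-coefficient exponential sums -/
def EP1 (F : ℕ → k) : Prop :=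
  ∃ (N : ℕ) (c : Fin N → k) (ν : Fin N → k),
    (∀ i, ν i ≠ 0) ∧ ∀ m : ℕ, F m = ∑ i, c i * (ν i) ^ m

lemma EP1.add {F G : ℕ → k} (hF : EP1 F) (hG : EP1 G) : EP1 (fun m => F m + G m) := by
  obtain ⟨N1, c1, ν1, h1, e1⟩ := hF
  obtain ⟨N2, c2, ν2, h2, e2⟩ := hG
  refine ⟨N1 + N2, Fin.append c1 c2, Fin.append ν1 ν2, ?_, ?_⟩
  · intro i
    refine Fin.addCases (fun j => ?_) (fun j => ?_) i
    · simpa [Fin.append_left] using h1 j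
    · simpa [Fin.append_right] using h2 j
  · intro m
    rw [Fin.sum_univ_add]
    simp only [Fin.append_left, Fin.append_right]
    rw [e1, e2]

lemma EP1.mul {F G : ℕ → k} (hF : EP1 F) (hG : EP1 G) : EP1 (fun m => F m * G m) := by
  obtain ⟨N1, c1, ν1, h1, e1⟩ := hF
  obtain ⟨N2, c2, ν2, h2, e2⟩ := hG
  refine ⟨N1 * N2, fun i => c1 (finProdFinEquiv.symm i).1 * c2 (finProdFinEquiv.symm i).2,
    fun i => ν1 (finProdFinEquiv.symm i).1 * ν2 (finProdFinEquiv.symm i).2,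
    fun i => mul_ne_zero (h1 _) (h2 _), ?_⟩
  intro m
  calc F m * G m
      = (∑ i, c1 i * ν1 i ^ m) * (∑ j, c2 j * ν2 j ^ m) := by rw [e1, e2]
    _ = ∑ i, ∑ j, ((c1 i * c2 j) * (ν1 i * ν2 j) ^ m) := by
        rw [Finset.sum_mul_sum]
        refine Finset.sum_congr rfl fun i _ => Finset.sum_congr rfl fun j _ => ?_
        simp only [mul_pow]; ring
    _ = ∑ p : Fin N1 × Fin N2, ((c1 p.1 * c2 p.2) * (ν1 p.1 * ν2 p.2) ^ m) :=
        (Fintype.sum_prod_type (f := fun p : Fin N1 × Fin N2 => (c1 p.1 * c2 p.2) * (ν1 p.1 * ν2 p.2) ^ m)).symm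
    _ = _ := (Equiv.sum_comp finProdFinEquiv.symm
        (fun p : Fin N1 × Fin N2 => (c1 p.1 * c2 p.2) * (ν1 p.1 * ν2 p.2) ^ m)).symm

lemma EP1.const (c : k) : EP1 (fun _ => c) :=
  ⟨1, fun _ => c, fun _ => 1, fun _ => one_ne_zero, fun m => by simp⟩

lemma EP1.geom {ν : k} (hν : ν ≠ 0) (c : k) : EP1 (fun m => c * ν ^ m) :=
  ⟨1, fun _ => c, fun _ => ν, fun _ => hν, fun m => by simp⟩

lemma EP1.mvEval {σ : Type*} (P : MvPolynomial σ k) (E : σ → ℕ → k)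
    (hE : ∀ i, EP1 (E i)) : EP1 (fun m => MvPolynomial.eval (fun i => E i m) P) := by
  induction P using MvPolynomial.induction_on with
  | C c => simpa using EP1.const c
  | add p q hp hq => simp only [map_add]; exact hp.add hq
  | mul_X p i hp => simp only [map_mul, MvPolynomial.eval_X]; exact hp.mul (hE i)

lemma EP1.linear {F : ℕ → k} (hF : EP1 F) {d : k} (h : ∀ m : ℕ, F m = (m:k) * d) :
    d = 0 := by
  classical
  obtain ⟨N, c, ν, hν, e⟩ := hF
  set T := Finset.image ν Finset.univ with hT
  set Q : k → k := fun t => ∑ i ∈ Finset.univ.filter (fun i => ν i = t), c i with hQ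
  have key : ∀ m : ℕ, F m = ∑ t ∈ T, Q t * t ^ m := by
    intro m
    rw [e, ← Finset.sum_fiberwise_of_maps_to (g := ν)
      (fun i _ => Finset.mem_image_of_mem ν (Finset.mem_univ i))
      (fun i => c i * ν i ^ m)]
    refine Finset.sum_congr rfl fun t ht => ?_
    simp only [hQ, Finset.sum_mul]
    refine Finset.sum_congr rfl fun i hi => ?_
    rw [(Finset.mem_filter.mp hi).2]
  set q : k → k[X] := fun t =>
    Polynomial.C (Q t) - (if t = 1 then Polynomial.C d * Polynomial.X else 0) with hq
  have hsum : ∀ m : ℕ, ∑ t ∈ insert (1:k) T, (q t).eval (m:k) * t ^ m = 0 := by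
    intro m
    have expand : ∀ t ∈ insert (1:k) T, (q t).eval (m:k) * t ^ m
        = Q t * t ^ m - (if t = 1 then (d * (m:k)) * t ^ m else 0) := by
      intro t _
      rcases eq_or_ne t 1 with rfl | hne
      · simp [hq]
      · simp [hq, hne]
    rw [Finset.sum_congr rfl expand, Finset.sum_sub_distrib]
    have h2 : ∑ t ∈ insert (1:k) T, (if t = 1 then (d * (m:k)) * t ^ m else 0)
        = d * (m:k) := by
      rw [Finset.sum_ite_eq' (insert (1:k) T) (1:k) (fun t => (d * (m:k)) * t ^ m)]
      simp
    have h1 : ∑ t ∈ insert (1:k) T, Q t * t ^ m = F m := by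
      by_cases hmem : (1:k) ∈ T
      · rw [Finset.insert_eq_self.mpr hmem, ← key]
      · rw [Finset.sum_insert hmem]
        have : Q 1 = 0 := by
          rw [hQ]
          apply Finset.sum_eq_zero
          intro i hi
          exact absurd ((Finset.mem_filter.mp hi).2 ▸ Finset.mem_image_of_mem ν
            (Finset.mem_univ i)) hmem
        rw [this, ← key]
        ring
    rw [h1, h2, h m]
    ring
  have hzero := expPoly_indep (insert (1:k) T)
    (by
      intro μ hμ
      rcases Finset.mem_insert.mp hμ with rfl | hμ'
      · exact one_ne_zero
      · obtain ⟨i, _, rfl⟩ := Finset.mem_image.mp hμ'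
        exact hν i)
    q hsum 1 (Finset.mem_insert_self _ _)
  have := congrArg (fun p => Polynomial.coeff p 1) hzero
  simpa [hq] using this

lemma EP2.cgeom {ν : k} (hν : ν ≠ 0) (c : k) : EP2 (fun _ m => c * ν ^ m) :=
  ⟨1, fun _ => Polynomial.C c, fun _ => ν, fun _ => hν, fun a m => by simp⟩

lemma EP2_sum {ι : Type*} (s : Finset ι) (F : ι → k → ℕ → k) (h : ∀ i ∈ s, EP2 (F i)) :
    EP2 (fun a m => ∑ i ∈ s, F i a m) := by
  classical
  induction s using Finset.cons_induction with
  | empty => simpa using EP2.const 0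
  | cons i s hi ih =>
    simp only [Finset.sum_cons]
    exact (h i (Finset.mem_cons_self i s)).add (ih fun j hj => h j (Finset.mem_cons.mpr (Or.inr hj)))

lemma EP1.geom' {ν : k} (hν : ν ≠ 0) : EP1 (fun m => ν ^ m) :=
  ⟨1, fun _ => 1, fun _ => ν, fun _ => hν, fun m => by simp⟩

lemma EP1.cgeom {ν : k} (hν : ν ≠ 0) (c : k) : EP1 (fun m => c * ν ^ m) :=
  ⟨1, fun _ => c, fun _ => ν, fun _ => hν, fun m => by simp⟩

lemma EP1_sum {ι : Type*} (s : Finset ι) (F : ι → ℕ → k) (h : ∀ i ∈ s, EP1 (F i)) :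
    EP1 (fun m => ∑ i ∈ s, F i m) := by
  classical
  induction s using Finset.cons_induction with
  | empty => simpa using EP1.const 0
  | cons i s hi ih =>
    simp only [Finset.sum_cons]
    exact (h i (Finset.mem_cons_self i s)).add (ih fun j hj => h j (Finset.mem_cons.mpr (Or.inr hj)))

end EP

end EPAll




section Jordan
variable {k : Type*} [Field k] [IsAlgClosed k] {n : ℕ}

lemma jordan_package (g : Matrix.GeneralLinearGroup (Fin n) k) :
    ∃ (D U : Matrix.GeneralLinearGroup (Fin n) k) (Pm Pinv : Matrix (Fin n) (Fin n) k) (lam : Fin n → k),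
      g = D * U ∧ (D * U = U * D) ∧ ((U : Matrix (Fin n) (Fin n) k) - 1) ^ n = 0 ∧
      (∀ i, lam i ≠ 0) ∧ Pm * Pinv = 1 ∧ Pinv * Pm = 1 ∧
      (D : Matrix (Fin n) (Fin n) k) = Pm * Matrix.diagonal lam * Pinv := by
  classical
  set gm : Matrix (Fin n) (Fin n) k := (g : Matrix (Fin n) (Fin n) k) with hgm
  set T : Module.End k (Fin n → k) := Matrix.mulVecLin gm with hT
  set A : k → Submodule k (Fin n → k) := T.maxGenEigenspace with hA
  have hInd : iSupIndep A := T.independent_maxGenEigenspace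
  have hSup : ⨆ μ, A μ = ⊤ := T.iSup_maxGenEigenspace_eq_top
  have hInt : DirectSum.IsInternal A :=
    DirectSum.isInternal_submodule_of_iSupIndep_of_iSup_eq_top hInd hSup
  set v : ∀ μ : k, Basis (Module.Free.ChooseBasisIndex k (A μ)) k (A μ) :=
    fun μ => Module.Free.chooseBasis k (A μ) with hv
  set B0 := hInt.collectedBasis v with hB0
  set eIdx := B0.indexEquiv (Pi.basisFun k (Fin n)) with heIdx
  set B := B0.reindex eIdx with hB
  set lam : Fin n → k := fun i => (eIdx.symm i).1 with hlam
  have hBmem : ∀ i, B i ∈ A (lam i) := by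
    intro i
    rw [hB, Basis.reindex_apply]
    exact hInt.collectedBasis_mem v _
  have hrepr0 : ∀ (μ : k) (x : Fin n → k), x ∈ A μ → ∀ i, lam i ≠ μ → B.repr x i = 0 := by
    intro μ x hx i hne
    rw [hB, Basis.repr_reindex_apply]
    have : eIdx.symm i = ⟨(eIdx.symm i).1, (eIdx.symm i).2⟩ := rfl
    rw [this]
    exact hInt.collectedBasis_repr_of_mem_ne v (Ne.symm hne) hx
  -- the transition matrices
  set Pm : Matrix (Fin n) (Fin n) k := (Pi.basisFun k (Fin n)).toMatrix B with hPm
  set Pinv : Matrix (Fin n) (Fin n) k := B.toMatrix (Pi.basisFun k (Fin n)) with hPinv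
  have hPmPinv : Pm * Pinv = 1 := (Pi.basisFun k (Fin n)).toMatrix_mul_toMatrix_flip B
  have hPinvPm : Pinv * Pm = 1 := B.toMatrix_mul_toMatrix_flip (Pi.basisFun k (Fin n))
  have hPm_apply : ∀ i j, Pm i j = B j i := by
    intro i j; simp [hPm, Basis.toMatrix_apply]
  have hPinv_apply : ∀ i j, Pinv i j = B.repr (Pi.single j 1) i := by
    intro i j; simp [hPinv, Basis.toMatrix_apply]
  -- mulVec facts
  have hPinv_mulVec : ∀ x : Fin n → k, Pinv.mulVec x = ⇑(B.repr x) := by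
    intro x
    funext i
    have hx : x = ∑ j, x j • (Pi.single j 1 : Fin n → k) := by
      funext p
      rw [Finset.sum_apply]
      simp [Pi.single_apply, eq_comm]
    calc Pinv.mulVec x i = ∑ j, B.repr (Pi.single j 1) i * x j := by
          simp [Matrix.mulVec, dotProduct, hPinv_apply]
      _ = B.repr x i := by
          conv_rhs => rw [hx]
          rw [map_sum, Finsupp.finset_sum_apply]
          refine Finset.sum_congr rfl fun j _ => ?_
          rw [map_smul]
          simp [mul_comm]
  have hPm_mulVec : ∀ c : Fin n → k, Pm.mulVec c = ∑ j, c j • B j := by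
    intro c
    funext i
    rw [Finset.sum_apply]
    simp [Matrix.mulVec, dotProduct, hPm_apply, mul_comm]
  set Dm : Matrix (Fin n) (Fin n) k := Pm * Matrix.diagonal lam * Pinv with hDm
  set Dminv : Matrix (Fin n) (Fin n) k := Pm * Matrix.diagonal (fun i => (lam i)⁻¹) * Pinv
    with hDminv
  -- T powers are matrix powers
  have hTK : ∀ (K : ℕ) (x : Fin n → k), (T ^ K) x = (gm ^ K).mulVec x := by
    intro K
    induction K with
    | zero => intro x; simp
    | succ K ih =>
      intro x
      rw [pow_succ, pow_succ, Module.End.mul_apply, ih (T x)]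
      rw [hT, Matrix.mulVecLin_apply, Matrix.mulVec_mulVec]
  -- lam nonzero
  have hlam0 : ∀ i, lam i ≠ 0 := by
    intro i h0
    have hmem := hBmem i
    rw [h0, hA, Module.End.mem_maxGenEigenspace] at hmem
    obtain ⟨K, hK⟩ := hmem
    simp only [zero_smul, sub_zero] at hK
    rw [hTK K] at hK
    have hBz : B i = 0 := by
      have h1 : (((g ^ K)⁻¹ : Matrix.GeneralLinearGroup (Fin n) k) : Matrix (Fin n) (Fin n) k).mulVec
          ((gm ^ K).mulVec (B i)) = B i := by
        rw [Matrix.mulVec_mulVec]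
        have : (((g ^ K)⁻¹ : Matrix.GeneralLinearGroup (Fin n) k) : Matrix (Fin n) (Fin n) k) * gm ^ K = 1 := by
          rw [hgm, ← Units.val_pow_eq_pow_val, ← Units.val_mul, inv_mul_cancel, Units.val_one]
        rw [this, Matrix.one_mulVec]
      rw [← h1, hK, Matrix.mulVec_zero]
    exact B.ne_zero i hBz
  -- Dm acts as μ on A μ
  have hDm_on : ∀ (μ : k) (x : Fin n → k), x ∈ A μ → Dm.mulVec x = μ • x := by
    intro μ x hx
    rw [hDm, ← Matrix.mulVec_mulVec x (Pm * Matrix.diagonal lam) Pinv,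
      ← Matrix.mulVec_mulVec _ Pm (Matrix.diagonal lam), hPinv_mulVec]
    have hdiag : (Matrix.diagonal lam).mulVec ⇑(B.repr x) = fun i => lam i * B.repr x i := by
      funext i
      rw [Matrix.mulVec_diagonal]
    rw [hdiag, hPm_mulVec]
    have hterm : ∀ j : Fin n, (lam j * B.repr x j) • B j = μ • (B.repr x j • B j) := by
      intro j
      rcases eq_or_ne (lam j) μ with h | h
      · rw [h, mul_smul]
      · rw [hrepr0 μ x hx j h]
        simp
    rw [Finset.sum_congr rfl fun j _ => hterm j, ← Finset.smul_sum, B.sum_repr]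
  -- invariance of A μ under gm
  have hTmem : ∀ (μ : k) (x : Fin n → k), x ∈ A μ → gm.mulVec x ∈ A μ := by
    intro μ x hx
    exact Module.End.mapsTo_maxGenEigenspace_of_comm (Commute.refl T) μ hx
  -- extensionality via mulVec
  have mulVec_ext : ∀ {M N : Matrix (Fin n) (Fin n) k},
      (∀ x, M.mulVec x = N.mulVec x) → M = N := by
    intro M N h
    ext i j
    have := congrFun (h (Pi.single j 1)) i
    simpa using this
  have span_arg : ∀ M : Matrix (Fin n) (Fin n) k,
      (∀ (μ : k) (x : Fin n → k), x ∈ A μ → M.mulVec x = 0) → M = 0 := by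
    intro M h
    apply mulVec_ext (N := 0)
    intro x
    rw [Matrix.zero_mulVec]
    have hx : x ∈ ⨆ μ, A μ := by rw [hSup]; trivial
    refine Submodule.iSup_induction A (motive := fun y => M.mulVec y = 0) hx ?_ ?_ ?_
    · intro μ y hy; exact h μ y hy
    · exact Matrix.mulVec_zero M
    · intro y z hy hz
      rw [Matrix.mulVec_add, hy, hz, add_zero]
  -- commutation
  have hcomm : Dm * gm = gm * Dm := by
    have := span_arg (Dm * gm - gm * Dm) ?_
    · exact sub_eq_zero.mp this
    intro μ x hx
    have e1 : (Dm * gm).mulVec x = μ • gm.mulVec x := by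
      rw [← Matrix.mulVec_mulVec x Dm gm, hDm_on μ _ (hTmem μ x hx)]
    have e2 : (gm * Dm).mulVec x = μ • gm.mulVec x := by
      rw [← Matrix.mulVec_mulVec x gm Dm, hDm_on μ x hx, Matrix.mulVec_smul]
    rw [Matrix.sub_mulVec, e1, e2, sub_self]
  -- invertibility of Dm
  have hDDinv : Dm * Dminv = 1 := by
    rw [hDm, hDminv]
    calc Pm * Matrix.diagonal lam * Pinv * (Pm * Matrix.diagonal (fun i => (lam i)⁻¹) * Pinv)
        = Pm * Matrix.diagonal lam * (Pinv * Pm) * Matrix.diagonal (fun i => (lam i)⁻¹) * Pinv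
          := by noncomm_ring
      _ = Pm * (Matrix.diagonal lam * Matrix.diagonal (fun i => (lam i)⁻¹)) * Pinv := by
          rw [hPinvPm]; noncomm_ring
      _ = 1 := by
          rw [Matrix.diagonal_mul_diagonal]
          have : (fun i => lam i * (lam i)⁻¹) = fun _ => (1:k) := by
            funext i; exact mul_inv_cancel₀ (hlam0 i)
          rw [this, Matrix.diagonal_one, mul_one, hPmPinv]
  have hDinvD : Dminv * Dm = 1 := by
    rw [hDm, hDminv]
    calc Pm * Matrix.diagonal (fun i => (lam i)⁻¹) * Pinv * (Pm * Matrix.diagonal lam * Pinv)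
        = Pm * Matrix.diagonal (fun i => (lam i)⁻¹) * (Pinv * Pm) * Matrix.diagonal lam * Pinv
          := by noncomm_ring
      _ = Pm * (Matrix.diagonal (fun i => (lam i)⁻¹) * Matrix.diagonal lam) * Pinv := by
          rw [hPinvPm]; noncomm_ring
      _ = 1 := by
          rw [Matrix.diagonal_mul_diagonal]
          have : (fun i => (lam i)⁻¹ * lam i) = fun _ => (1:k) := by
            funext i; exact inv_mul_cancel₀ (hlam0 i)
          rw [this, Matrix.diagonal_one, mul_one, hPmPinv]
  set Dgl : Matrix.GeneralLinearGroup (Fin n) k := ⟨Dm, Dminv, hDDinv, hDinvD⟩ with hDgl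
  set U : Matrix.GeneralLinearGroup (Fin n) k := Dgl⁻¹ * g with hU
  have hUval : (U : Matrix (Fin n) (Fin n) k) = Dminv * gm := by
    rw [hU, Units.val_mul]
    congr 1
  -- nilpotency of gm - Dm
  have hnilp : (gm - Dm) ^ n = 0 := by
    apply span_arg
    intro μ x hx
    have key : ∀ (j : ℕ) (y : Fin n → k), y ∈ A μ →
        ((gm - Dm) ^ j).mulVec y = ((T - μ • 1) ^ j) y ∧ ((T - μ • 1) ^ j) y ∈ A μ := by
      intro j
      induction j with
      | zero => intro y hy; simp [hy]
      | succ j ih =>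
        intro y hy
        have hstep : (gm - Dm).mulVec y = (T - μ • 1) y := by
          rw [Matrix.sub_mulVec, hDm_on μ y hy]
          simp [hT, Matrix.mulVecLin_apply]
        have hmem1 : (T - μ • 1) y ∈ A μ := by
          have h1 : T y ∈ A μ := by
            have := hTmem μ y hy
            simpa [hT, Matrix.mulVecLin_apply] using this
          have h2 : (μ • 1 : Module.End k (Fin n → k)) y ∈ A μ := by
            simpa using Submodule.smul_mem _ μ hy
          simpa using Submodule.sub_mem _ h1 h2
        obtain ⟨ih1, ih2⟩ := ih ((T - μ • 1) y) hmem1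
        constructor
        · have hsplit : ((gm - Dm) ^ (j+1)).mulVec y
              = ((gm - Dm) ^ j).mulVec ((gm - Dm).mulVec y) := by
            rw [pow_succ, ← Matrix.mulVec_mulVec]
          rw [hsplit, hstep, ih1, pow_succ]
          rfl
        · rw [pow_succ]
          exact ih2
    obtain ⟨h1, -⟩ := key n x hx
    rw [h1]
    have hfr : A μ = (T.genEigenspace μ) (finrank k (Fin n → k) : ℕ∞) :=
      T.maxGenEigenspace_eq_genEigenspace_finrank μ
    have hfin : finrank k (Fin n → k) = n := by simp
    rw [hfr, hfin] at hx
    rw [Module.End.mem_genEigenspace_nat, LinearMap.mem_ker] at hx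
    exact hx
  -- nilpotency of U - 1
  have hDinv_comm : Dminv * gm = gm * Dminv := by
    calc Dminv * gm = Dminv * gm * (Dm * Dminv) := by rw [hDDinv, mul_one]
      _ = Dminv * (gm * Dm) * Dminv := by noncomm_ring
      _ = Dminv * (Dm * gm) * Dminv := by rw [hcomm]
      _ = (Dminv * Dm) * (gm * Dminv) := by noncomm_ring
      _ = gm * Dminv := by rw [hDinvD, one_mul]
  have hUnilp : ((U : Matrix (Fin n) (Fin n) k) - 1) ^ n = 0 := by
    have hfac : (U : Matrix (Fin n) (Fin n) k) - 1 = Dminv * (gm - Dm) := by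
      rw [hUval, mul_sub]
      congr 1
      exact hDinvD.symm
    have c1 : Commute Dminv gm := hDinv_comm
    have c2 : Commute Dminv Dm := hDinvD.trans hDDinv.symm
    have hcomm2 : Commute Dminv (gm - Dm) := c1.sub_right c2
    rw [hfac, hcomm2.mul_pow, hnilp, mul_zero]
  refine ⟨Dgl, U, Pm, Pinv, lam, ?_, ?_, hUnilp, hlam0, hPmPinv, hPinvPm, rfl⟩
  · rw [hU, mul_inv_cancel_left]
  · apply Units.ext
    show Dm * (Dminv * gm) = (Dminv * gm) * Dm
    calc Dm * (Dminv * gm) = (Dm * Dminv) * gm := by noncomm_ring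
      _ = gm := by rw [hDDinv, one_mul]
      _ = (Dminv * gm) * Dm := by
          rw [hDinv_comm, mul_assoc, hDinvD, mul_one]




end Jordan

section Sigma
variable {k : Type*} [Field k] [CharZero k] {n : ℕ}

lemma smeval_int (p : Polynomial ℤ) (a : k) :
    p.smeval a = (p.map (Int.castRingHom k)).eval a := by
  induction p using Polynomial.induction_on' with
  | add p q hp hq => rw [Polynomial.smeval_add, Polynomial.map_add, eval_add, hp, hq]
  | monomial m c =>
    rw [Polynomial.smeval_monomial, Polynomial.map_monomial, eval_monomial]
    simp [zsmul_eq_mul]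

lemma chooseEval (a : k) (K : ℕ) :
    Ring.choose a K = ((K.factorial : k))⁻¹ * (descPochhammer k K).eval a := by
  have h := Ring.descPochhammer_eq_factorial_smul_choose (R := k) a K
  have h2 : (descPochhammer ℤ K).smeval a = (descPochhammer k K).eval a := by
    rw [smeval_int, descPochhammer_map]
  rw [h2] at h
  have hfac : ((K.factorial : k)) ≠ 0 := Nat.cast_ne_zero.mpr (Nat.factorial_ne_zero K)
  rw [h, nsmul_eq_mul]
  field_simp

variable (Nm : Matrix (Fin n) (Fin n) k)

noncomputable def sig (a : k) : Matrix (Fin n) (Fin n) k :=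
  ∑ j ∈ Finset.range (n+1), Ring.choose a j • Nm ^ j

variable {Nm}

lemma npow_zero_of (hN : Nm ^ n = 0) : ∀ j, n ≤ j → Nm ^ j = 0 := by
  intro j hj
  rw [← Nat.sub_add_cancel hj, pow_add, hN, mul_zero]

lemma sig_ext (hN : Nm ^ n = 0) {M : ℕ} (hM : n + 1 ≤ M) (a : k) :
    sig Nm a = ∑ j ∈ Finset.range M, Ring.choose a j • Nm ^ j := by
  refine Finset.sum_subset (Finset.range_subset_range.mpr hM) ?_
  intro j hj hnot
  rw [npow_zero_of hN j ?_, smul_zero]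
  simp only [Finset.mem_range] at hj hnot
  omega

lemma sig_mul (hN : Nm ^ n = 0) (a b : k) : sig Nm a * sig Nm b = sig Nm (a + b) := by
  classical
  set M := 2 * n + 2 with hM
  set F : ℕ × ℕ → Matrix (Fin n) (Fin n) k :=
    fun pq => (Ring.choose a pq.1 * Ring.choose b pq.2) • Nm ^ (pq.1 + pq.2) with hF
  have hL : sig Nm a * sig Nm b = ∑ pq ∈ Finset.range M ×ˢ Finset.range M, F pq := by
    rw [sig_ext hN (M := M) (by omega) a, sig_ext hN (M := M) (by omega) b, Finset.sum_mul_sum]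
    rw [Finset.sum_product]
    refine Finset.sum_congr rfl fun i _ => Finset.sum_congr rfl fun j _ => ?_
    show (Ring.choose a i • Nm ^ i) * (Ring.choose b j • Nm ^ j)
        = (Ring.choose a i * Ring.choose b j) • Nm ^ (i + j)
    rw [smul_mul_smul_comm, pow_add]
  set D : Finset (ℕ × ℕ) := (Finset.range M).biUnion (fun l => Finset.HasAntidiagonal.antidiagonal l) with hD
  have hdisj : ∀ l1 ∈ Finset.range M, ∀ l2 ∈ Finset.range M, l1 ≠ l2 →
      Disjoint (Finset.HasAntidiagonal.antidiagonal l1) (Finset.HasAntidiagonal.antidiagonal l2) := by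
    intro l1 _ l2 _ hne
    rw [Finset.disjoint_left]
    intro pq h1 h2
    rw [Finset.HasAntidiagonal.mem_antidiagonal] at h1 h2
    exact hne (h1 ▸ h2)
  have hR : sig Nm (a + b) = ∑ pq ∈ D, F pq := by
    rw [sig_ext hN (M := M) (by omega) (a + b), hD, Finset.sum_biUnion]
    · refine Finset.sum_congr rfl fun l _ => ?_
      rw [Ring.add_choose_eq l (Commute.all a b), Finset.sum_smul]
      refine Finset.sum_congr rfl fun pq hpq => ?_
      show _ = (Ring.choose a pq.1 * Ring.choose b pq.2) • Nm ^ (pq.1 + pq.2)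
      rw [Finset.HasAntidiagonal.mem_antidiagonal.mp hpq]
    · exact hdisj
  rw [hL, hR]
  refine (Finset.sum_subset ?_ ?_).symm
  · intro pq hpq
    rw [hD, Finset.mem_biUnion] at hpq
    obtain ⟨l, hl, hmem⟩ := hpq
    rw [Finset.HasAntidiagonal.mem_antidiagonal] at hmem
    rw [Finset.mem_product, Finset.mem_range, Finset.mem_range]
    rw [Finset.mem_range] at hl
    omega
  · intro pq hpq hnot
    have : ¬ (pq.1 + pq.2 < M) := by
      intro hlt
      exact hnot (Finset.mem_biUnion.mpr ⟨pq.1 + pq.2, Finset.mem_range.mpr hlt,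
        Finset.HasAntidiagonal.mem_antidiagonal.mpr rfl⟩)
    show (Ring.choose a pq.1 * Ring.choose b pq.2) • Nm ^ (pq.1 + pq.2) = 0
    rw [npow_zero_of hN _ (by omega), smul_zero]

lemma sig_zero : sig Nm 0 = 1 := by
  rw [sig]
  rw [Finset.sum_eq_single 0]
  · have : ((0:k)) = ((0:ℕ) : k) := by norm_num
    rw [this, Ring.choose_natCast]
    simp
  · intro j _ hj
    have : ((0:k)) = ((0:ℕ) : k) := by norm_num
    rw [this, Ring.choose_natCast]
    obtain ⟨m, rfl⟩ := Nat.exists_eq_succ_of_ne_zero hj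
    simp [Nat.choose_zero_succ]
  · intro h
    exact absurd (Finset.mem_range.mpr (by omega)) h

lemma sig_one (hn : 0 < n) : sig Nm 1 = 1 + Nm := by
  rw [sig]
  have hcast : ((1:k)) = ((1:ℕ) : k) := by norm_num
  have hsub : Finset.range 2 ⊆ Finset.range (n+1) := Finset.range_subset_range.mpr (by omega)
  rw [← Finset.sum_subset hsub ?_]
  · rw [Finset.sum_range_succ, Finset.sum_range_one]
    rw [hcast, Ring.choose_natCast, Ring.choose_natCast]
    simp
  · intro j _ hj
    rw [Finset.mem_range] at hj
    rw [hcast, Ring.choose_natCast]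
    rw [Nat.choose_eq_zero_of_lt (by omega)]
    simp

lemma sig_natCast (hN : Nm ^ n = 0) (m : ℕ) : sig Nm (m : k) = (1 + Nm) ^ m := by
  have hcomm : Commute Nm (1 : Matrix (Fin n) (Fin n) k) := Commute.one_right Nm
  rw [add_comm, hcomm.add_pow, sig_ext hN (M := n + m + 2) (by omega)]
  have hext : ∑ j ∈ Finset.range (m+1),
        Nm ^ j * 1 ^ (m - j) * ((m.choose j : ℕ) : Matrix (Fin n) (Fin n) k)
      = ∑ j ∈ Finset.range (n + m + 2),
        Nm ^ j * 1 ^ (m - j) * ((m.choose j : ℕ) : Matrix (Fin n) (Fin n) k) := by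
    refine Finset.sum_subset (Finset.range_subset_range.mpr (by omega)) ?_
    intro j _ hj
    rw [Finset.mem_range] at hj
    rw [Nat.choose_eq_zero_of_lt (by omega), Nat.cast_zero, mul_zero]
  rw [hext]
  refine Finset.sum_congr rfl fun j _ => ?_
  rw [Ring.choose_natCast, Nat.cast_smul_eq_nsmul k, nsmul_eq_mul, one_pow, mul_one,
    (Nat.cast_commute (m.choose j) (Nm ^ j)).eq]

noncomputable def QmatP (Nm : Matrix (Fin n) (Fin n) k) : Fin n → Fin n → Polynomial k :=
  fun i j => ∑ l ∈ Finset.range (n+1),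
    Polynomial.C ((l.factorial : k)⁻¹ * (Nm ^ l) i j) * descPochhammer k l

lemma sig_entry (a : k) (i j : Fin n) : sig Nm a i j = (QmatP Nm i j).eval a := by
  rw [sig, QmatP, Polynomial.eval_finset_sum, Matrix.sum_apply]
  refine Finset.sum_congr rfl fun l _ => ?_
  rw [Matrix.smul_apply, smul_eq_mul, chooseEval, eval_mul, eval_C]
  ring

end Sigma

end AuxiliaryLemmas

open Matrix MvPolynomial

/-- A subgroup of `GL n k` is Zariski closed if membership (among invertible matrices)
is cut out by polynomial equations in the matrix entries. -/
def IsZariskiClosedSubgroup {k : Type*} [CommRing k] {n : ℕ}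
    (G : Subgroup (GL (Fin n) k)) : Prop :=
  ∃ S : Set (MvPolynomial (Fin n × Fin n) k),
    ∀ M : GL (Fin n) k, M ∈ G ↔
      ∀ P ∈ S, MvPolynomial.eval (fun ij => (M : Matrix (Fin n) (Fin n) k) ij.1 ij.2) P = 0

/-- A function on a subgroup of `GL n k` is regular if it is given by a polynomial in the
matrix entries divided by a power of the determinant. -/
def IsRegularFunction {k : Type*} [Field k] {n : ℕ}
    (G : Subgroup (GL (Fin n) k)) (f : G → k) : Prop :=
  ∃ (m : ℕ) (P : MvPolynomial (Fin n × Fin n) k),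
    ∀ g : G, f g =
      ((Matrix.det ((g : GL (Fin n) k) : Matrix (Fin n) (Fin n) k))⁻¹) ^ m *
        MvPolynomial.eval
          (fun ij => ((g : GL (Fin n) k) : Matrix (Fin n) (Fin n) k) ij.1 ij.2) P

/-- Let `1 → N → G → U → 1` be a short exact sequence of linear algebraic
groups over an algebraically closed field `k` of characteristic zero, with `U ≅ G_a`
(the additive group `(k,+)`): i.e. `G` is a Zariski closed subgroup of some `GL n k` and
`ρ : G → G_a` is a surjective regular homomorphism (with kernel `N`). Then the sequence
splits: there is an algebraic one-parameter unipotent subgroup of `G`, i.e. a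
homomorphism `s : G_a → G` with polynomial entries, such that `ρ ∘ s = id`. -/
theorem stmt4 {k : Type*} [Field k] [IsAlgClosed k] [CharZero k] {n : ℕ}
    (G : Subgroup (GL (Fin n) k)) (hG : IsZariskiClosedSubgroup G)
    (ρ : G →* Multiplicative k)
    (hρreg : IsRegularFunction G (fun g => Multiplicative.toAdd (ρ g)))
    (hρsurj : Function.Surjective ρ) :
    ∃ s : k → GL (Fin n) k,
      (∀ a, s a ∈ G) ∧
      s 0 = 1 ∧
      (∀ a b, s (a + b) = s a * s b) ∧
      (∃ Q : Fin n → Fin n → Polynomial k,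
        ∀ (a : k) (i j : Fin n), ((s a : GL (Fin n) k) : Matrix (Fin n) (Fin n) k) i j
          = (Q i j).eval a) ∧
      (∀ (a : k) (h : s a ∈ G), ρ ⟨s a, h⟩ = Multiplicative.ofAdd a) := by
  classical
  rcases Nat.eq_zero_or_pos n with hn0 | hn
  · exfalso
    obtain ⟨x, hx⟩ := hρsurj (Multiplicative.ofAdd (1:k))
    obtain ⟨y, hy⟩ := hρsurj (Multiplicative.ofAdd (0:k))
    have hxy : x = y := by
      apply Subtype.ext
      apply Units.ext
      apply Matrix.ext
      intro i
      subst hn0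
      exact i.elim0
    rw [hxy, hy] at hx
    have h10 : (1:k) = 0 := by
      have := congrArg Multiplicative.toAdd hx
      simpa using this
    exact one_ne_zero h10
  obtain ⟨S, hS⟩ := hG
  set f : G → k := fun x => Multiplicative.toAdd (ρ x) with hf
  have hfmul : ∀ x y : G, f (x * y) = f x + f y := by
    intro x y
    show Multiplicative.toAdd (ρ (x * y)) = _
    rw [_root_.map_mul]
    rfl
  obtain ⟨m₀, P₀, hreg⟩ := hρreg
  obtain ⟨g₀, hg₀⟩ := hρsurj (Multiplicative.ofAdd (1:k))
  have hfg₀ : f g₀ = 1 := by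
    show Multiplicative.toAdd (ρ g₀) = 1
    rw [hg₀]
    rfl
  obtain ⟨D, U, Pm, Pinv, lam, hgDU, hDU, hUnil, hlam0, hPmPinv, hPinvPm, hDval⟩ :=
    jordan_package (k := k) (g₀ : GL (Fin n) k)
  set Nm : Matrix (Fin n) (Fin n) k := (U : Matrix (Fin n) (Fin n) k) - 1 with hNm
  have hNn : Nm ^ n = 0 := hUnil
  have hUval : (U : Matrix (Fin n) (Fin n) k) = 1 + Nm := by rw [hNm]; abel
  -- the one-parameter subgroup, as units
  set sGL : k → GL (Fin n) k := fun a =>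
    ⟨sig Nm a, sig Nm (-a),
      by rw [sig_mul hNn, add_neg_cancel, sig_zero],
      by rw [sig_mul hNn, neg_add_cancel, sig_zero]⟩ with hsGL
  have hsGL_val : ∀ a, (sGL a : Matrix (Fin n) (Fin n) k) = sig Nm a := fun a => rfl
  have hsGL_hom : ∀ a b, sGL (a + b) = sGL a * sGL b := by
    intro a b
    apply Units.ext
    show sig Nm (a + b) = sig Nm a * sig Nm b
    rw [sig_mul hNn]
  have hsGL_zero : sGL 0 = 1 := by
    apply Units.ext
    exact sig_zero
  have hsGL_one : sGL 1 = U := by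
    apply Units.ext
    show sig Nm 1 = _
    rw [sig_one hn, hUval]
  -- powers of D
  set Dv : Matrix (Fin n) (Fin n) k := (D : Matrix (Fin n) (Fin n) k) with hDv
  have hDpow : ∀ m : ℕ, Dv ^ m = Pm * Matrix.diagonal (fun i => lam i ^ m) * Pinv := by
    intro m
    induction m with
    | zero =>
      rw [pow_zero]
      rw [show (fun i => lam i ^ 0) = fun _ : Fin n => (1:k) from funext fun i => pow_zero _]
      rw [Matrix.diagonal_one, mul_one, hPmPinv]
    | succ m ih =>
      rw [pow_succ, ih, hDval]
      calc Pm * Matrix.diagonal (fun i => lam i ^ m) * Pinv * (Pm * Matrix.diagonal lam * Pinv)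
          = Pm * Matrix.diagonal (fun i => lam i ^ m) * (Pinv * Pm)
            * Matrix.diagonal lam * Pinv := by noncomm_ring
        _ = Pm * (Matrix.diagonal (fun i => lam i ^ m) * Matrix.diagonal lam) * Pinv := by
            rw [hPinvPm, mul_one]
            noncomm_ring
        _ = Pm * Matrix.diagonal (fun i => lam i ^ (m+1)) * Pinv := by
            rw [Matrix.diagonal_mul_diagonal,
              show (fun i => lam i ^ m * lam i) = fun i => lam i ^ (m+1) from
                funext fun i => (pow_succ (lam i) m).symm]
  have hg₀mem : ∀ m : ℕ, (g₀ : GL (Fin n) k) ^ m ∈ G := fun m => pow_mem g₀.2 m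
  have hgpow : ∀ m : ℕ, (((g₀ : GL (Fin n) k) ^ m : GL (Fin n) k) : Matrix (Fin n) (Fin n) k)
      = sig Nm (m : k) * Dv ^ m := by
    intro m
    have hg₀UD : (g₀ : GL (Fin n) k) = U * D := hgDU.trans hDU
    have hcomm : Commute U D := by
      unfold Commute SemiconjBy
      exact hDU.symm
    rw [hg₀UD, hcomm.mul_pow, Units.val_mul, Units.val_pow_eq_pow_val,
      Units.val_pow_eq_pow_val, hUval, ← sig_natCast hNn]
  -- the two-parameter family of entries
  set Ent : (Fin n × Fin n) → k → ℕ → k := fun ij a m =>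
    (sig Nm a * Dv ^ m) ij.1 ij.2 with hEnt
  have hEntEP : ∀ ij, EP2 (Ent ij) := by
    intro ij
    have hform : Ent ij = fun a m => ∑ p, ∑ t,
        (QmatP Nm ij.1 p).eval a * ((Pm p t * Pinv t ij.2) * lam t ^ m) := by
      funext a m
      rw [hEnt]
      show (sig Nm a * Dv ^ m) ij.1 ij.2 = _
      rw [Matrix.mul_apply, hDpow m]
      refine Finset.sum_congr rfl fun p _ => ?_
      rw [Matrix.mul_apply, Finset.mul_sum]
      refine Finset.sum_congr rfl fun t _ => ?_
      rw [Matrix.mul_diagonal, sig_entry]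
      ring
    rw [hform]
    refine EP2_sum Finset.univ _ fun p _ => EP2_sum Finset.univ _ fun t _ => ?_
    exact (EP2.poly _).mul (EP2.cgeom (hlam0 t) _)
  -- vanishing of the defining equations on the whole family
  have hmain : ∀ P ∈ S, ∀ (a : k) (m : ℕ),
      MvPolynomial.eval (fun ij => Ent ij a m) P = 0 := by
    intro P hP
    refine EP2.vanish (EP2.mvEval P _ hEntEP) ?_
    intro m
    have hdiag : (fun ij : Fin n × Fin n => Ent ij (m:k) m) =
        fun ij => (((g₀ : GL (Fin n) k) ^ m : GL (Fin n) k) : Matrix (Fin n) (Fin n) k)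
          ij.1 ij.2 := by
      funext ij
      rw [hEnt, hgpow m]
    rw [hdiag]
    exact (hS _).mp (hg₀mem m) P hP
  -- membership of the family elements
  have hsGL_mem : ∀ a, sGL a ∈ G := by
    intro a
    refine (hS _).mpr fun P hP => ?_
    have h0 := hmain P hP a 0
    have he : (fun ij : Fin n × Fin n => Ent ij a 0) =
        fun ij => ((sGL a : GL (Fin n) k) : Matrix (Fin n) (Fin n) k) ij.1 ij.2 := by
      funext ij
      rw [hEnt, hsGL_val]
      show (sig Nm a * Dv ^ 0) ij.1 ij.2 = sig Nm a ij.1 ij.2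
      rw [pow_zero, mul_one]
    rwa [he] at h0
  have hD_mem : D ∈ G := by
    refine (hS _).mpr fun P hP => ?_
    have h0 := hmain P hP 0 1
    have he : (fun ij : Fin n × Fin n => Ent ij 0 1) =
        fun ij => ((D : GL (Fin n) k) : Matrix (Fin n) (Fin n) k) ij.1 ij.2 := by
      funext ij
      rw [hEnt]
      show (sig Nm 0 * Dv ^ 1) ij.1 ij.2 = Dv ij.1 ij.2
      rw [sig_zero, pow_one, one_mul]
    rwa [he] at h0
  have hU_mem : U ∈ G := by
    rw [← hsGL_one]
    exact hsGL_mem 1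
  -- f (D) = 0
  set Dsub : G := ⟨D, hD_mem⟩ with hDsub
  have hdetD : Dv.det ≠ 0 := by
    have h1 : Dv.det * ((D⁻¹ : GL (Fin n) k) : Matrix (Fin n) (Fin n) k).det = 1 := by
      rw [← Matrix.det_mul, ← Units.val_mul, mul_inv_cancel, Units.val_one, Matrix.det_one]
    exact left_ne_zero_of_mul_eq_one h1
  set β : k := (Dv.det⁻¹) ^ m₀ with hβ
  have hβ0 : β ≠ 0 := pow_ne_zero _ (inv_ne_zero hdetD)
  have hDsubpow_val : ∀ m : ℕ,
      (((Dsub ^ m : G) : GL (Fin n) k) : Matrix (Fin n) (Fin n) k) = Dv ^ m := by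
    intro m
    rw [SubmonoidClass.coe_pow, Units.val_pow_eq_pow_val]
  have hfD_eq : ∀ m : ℕ, f (Dsub ^ m) = β ^ m *
      MvPolynomial.eval (fun ij => (Dv ^ m) ij.1 ij.2) P₀ := by
    intro m
    have h := hreg (Dsub ^ m)
    rw [hDsubpow_val m] at h
    rw [hf] at h ⊢
    rw [h, Matrix.det_pow]
    congr 1
    rw [hβ, ← inv_pow, ← pow_mul, ← pow_mul, Nat.mul_comm]
  have hfD_lin : ∀ m : ℕ, f (Dsub ^ m) = (m : k) * f Dsub := by
    intro m
    show Multiplicative.toAdd (ρ (Dsub ^ m)) = _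
    rw [map_pow, toAdd_pow, nsmul_eq_mul]
  have hEP1D : EP1 (fun m => f (Dsub ^ m)) := by
    have hfun : (fun m => f (Dsub ^ m)) = fun m => β ^ m *
        MvPolynomial.eval
          (fun ij => (Pm * Matrix.diagonal (fun i => lam i ^ m) * Pinv) ij.1 ij.2) P₀ := by
      funext m
      rw [hfD_eq m, hDpow m]
    rw [hfun]
    refine (EP1.geom' hβ0).mul (EP1.mvEval P₀ _ fun ij => ?_)
    have he : (fun m => (Pm * Matrix.diagonal (fun i => lam i ^ m) * Pinv) ij.1 ij.2)
        = fun m => ∑ t, (Pm ij.1 t * Pinv t ij.2) * lam t ^ m := by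
      funext m
      rw [Matrix.mul_apply]
      refine Finset.sum_congr rfl fun t _ => ?_
      rw [Matrix.mul_diagonal]
      ring
    rw [he]
    exact EP1_sum Finset.univ _ fun t _ => EP1.cgeom (hlam0 t) _
  have hfD0 : f Dsub = 0 := EP1.linear hEP1D hfD_lin
  -- the determinant of sig is constant 1
  set QM : Matrix (Fin n) (Fin n) (Polynomial k) := Matrix.of (fun i j => QmatP Nm i j) with hQM
  set pdet : Polynomial k := QM.det with hpdet
  have hdet_eval : ∀ a : k, (sig Nm a).det = pdet.eval a := by
    intro a
    have h1 := RingHom.map_det (Polynomial.evalRingHom a) QM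
    have hM : (Polynomial.evalRingHom a).mapMatrix QM = sig Nm a := by
      apply Matrix.ext
      intro i j
      show Polynomial.eval a (QM i j) = sig Nm a i j
      rw [hQM, sig_entry]
      rfl
    rw [← hM, ← h1]
    rfl
  have hdet1 : ∀ a : k, (sig Nm a).det = 1 := by
    have hmul : ∀ a : k, pdet.eval a * (pdet.comp (-Polynomial.X)).eval a = 1 := by
      intro a
      rw [Polynomial.eval_comp]
      simp only [Polynomial.eval_neg, Polynomial.eval_X]
      rw [← hdet_eval, ← hdet_eval, ← Matrix.det_mul, sig_mul hNn, add_neg_cancel, sig_zero,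
        Matrix.det_one]
    have hpoly : pdet * pdet.comp (-Polynomial.X) = 1 := by
      apply Polynomial.funext
      intro r
      rw [Polynomial.eval_mul, hmul r, Polynomial.eval_one]
    obtain ⟨r, -, hCr⟩ := Polynomial.isUnit_iff.mp (IsUnit.of_mul_eq_one _ hpoly)
    have h0 : pdet.eval 0 = 1 := by
      rw [← hdet_eval, sig_zero, Matrix.det_one]
    rw [← hCr, Polynomial.eval_C] at h0
    intro a
    rw [hdet_eval, ← hCr, Polynomial.eval_C, h0]
  -- φ is polynomial and additive; conclude φ a = a
  set ssub : k → G := fun a => ⟨sGL a, hsGL_mem a⟩ with hssub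
  set φ : k → k := fun a => f (ssub a) with hφ
  set PP : Polynomial k := MvPolynomial.eval₂ Polynomial.C
    (fun ij : Fin n × Fin n => QmatP Nm ij.1 ij.2) P₀ with hPP
  have hPP_eval : ∀ a : k,
      PP.eval a = MvPolynomial.eval (fun ij : Fin n × Fin n => (QmatP Nm ij.1 ij.2).eval a)
        P₀ := by
    intro a
    have h := MvPolynomial.eval₂_comp_left (Polynomial.evalRingHom a) Polynomial.C
      (fun ij : Fin n × Fin n => QmatP Nm ij.1 ij.2) P₀
    have hid : (Polynomial.evalRingHom a).comp Polynomial.C = RingHom.id k := by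
      ext c
      simp
    rw [hid] at h
    have h2 : MvPolynomial.eval₂ (RingHom.id k)
        (⇑(Polynomial.evalRingHom a) ∘ fun ij : Fin n × Fin n => QmatP Nm ij.1 ij.2) P₀
        = MvPolynomial.eval
          (fun ij : Fin n × Fin n => (QmatP Nm ij.1 ij.2).eval a) P₀ := rfl
    rw [hPP]
    show Polynomial.evalRingHom a (MvPolynomial.eval₂ Polynomial.C _ P₀) = _
    rw [h, h2]
  have hφ_poly : ∀ a, φ a = PP.eval a := by
    intro a
    have h := hreg (ssub a)
    have hval : ((ssub a : G) : GL (Fin n) k) = sGL a := rfl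
    rw [hval, hsGL_val, hdet1 a, inv_one, one_pow, one_mul] at h
    have hfa : φ a = f (ssub a) := rfl
    rw [hfa, h, hPP_eval]
    have he2 : (fun ij : Fin n × Fin n => sig Nm a ij.1 ij.2)
        = fun ij : Fin n × Fin n => Polynomial.eval a (QmatP Nm ij.1 ij.2) := by
      funext ij
      rw [sig_entry]
    rw [he2]
  have hssub_hom : ∀ a b, ssub (a + b) = ssub a * ssub b := by
    intro a b
    apply Subtype.ext
    show sGL (a + b) = (sGL a) * (sGL b)
    exact hsGL_hom a b
  have hφ_nat : ∀ m : ℕ, φ (m : k) = (m : k) * φ 1 := by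
    intro m
    have hpow : ssub ((m : ℕ) : k) = (ssub 1) ^ m := by
      induction m with
      | zero =>
        apply Subtype.ext
        show sGL ((0:ℕ):k) = _
        rw [Nat.cast_zero, hsGL_zero, pow_zero]
        rfl
      | succ m ih =>
        rw [Nat.cast_succ, hssub_hom, ih, pow_succ]
    show f (ssub ((m : ℕ) : k)) = _
    rw [hpow]
    show Multiplicative.toAdd (ρ ((ssub 1) ^ m)) = _
    rw [map_pow, toAdd_pow, nsmul_eq_mul]
  have hφ1 : φ 1 = 1 := by
    have hUsub : ssub 1 = ⟨U, hU_mem⟩ := by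
      apply Subtype.ext
      show sGL 1 = U
      exact hsGL_one
    have hg₀split : g₀ = Dsub * ⟨U, hU_mem⟩ := by
      apply Subtype.ext
      show (g₀ : GL (Fin n) k) = D * U
      exact hgDU
    have hadd := hfmul Dsub ⟨U, hU_mem⟩
    rw [← hg₀split, hfg₀, hfD0, zero_add] at hadd
    show f (ssub 1) = 1
    rw [hUsub, ← hadd]
  have hφ_lin : ∀ a, φ a = a := by
    have hPPX : PP = Polynomial.C (1:k) * Polynomial.X := by
      apply Polynomial.eq_of_infinite_eval_eq
      apply Set.Infinite.mono (s := Set.range ((↑) : ℕ → k))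
      · rintro x ⟨m, rfl⟩
        show PP.eval _ = _
        rw [← hφ_poly, hφ_nat, hφ1, mul_one]
        simp
      · exact Set.infinite_range_of_injective Nat.cast_injective
    intro a
    rw [hφ_poly, hPPX]
    simp
  -- final assembly
  refine ⟨fun a => sGL a, hsGL_mem, hsGL_zero, hsGL_hom,
    ⟨fun i j => QmatP Nm i j, ?_⟩, ?_⟩
  · intro a i j
    rw [hsGL_val]
    exact sig_entry a i j
  · intro a h
    have heq : (⟨sGL a, h⟩ : G) = ssub a := rfl
    have htd : Multiplicative.toAdd (ρ (⟨sGL a, h⟩ : G)) = a := by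
      rw [heq]
      exact hφ_lin a
    rw [← ofAdd_toAdd (ρ ⟨sGL a, h⟩), htd]
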